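/- With f = X(X−1)(X−α₁)(X−α₂)(X−α₃) ∈ 𝔽_p[X], c_k the coefficient of X^k in f^{(p−1)/2}, F a finite field with p² elements, and f̃ ∈ F[X] the image of f under the embedding 𝔽_p → F, one has ∑_{α ∈ F} f̃(α)^{(p²−1)/2} = −( 2·c̃_{p−2}·c̃_{2p−1} + c̃_{p−1}² + c̃_{2p−2}² ), where c̃_k is the image of c_k in F. (This is the sum of the preceding statement since f̃(α^p) = f̃(α)^p for f with coefficients in 𝔽_p, so f̃(α)·f̃(α^p) = f̃(α)^{p+1}.) -/

import Mathlib

open Polynomial Finset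

lemma sum_pow_full (K : Type*) [Field K] [Fintype K] (m : ℕ) :
    ∑ x : K, x ^ m = if m ≠ 0 ∧ (Fintype.card K - 1) ∣ m then -1 else 0 := by
  classical
  by_cases hm : m = 0
  · simp [hm, FiniteField.cast_card_eq_zero]
  have h1 : (if m ≠ 0 ∧ (Fintype.card K - 1) ∣ m then (-1 : K) else 0)
      = if (Fintype.card K - 1) ∣ m then -1 else 0 := by
    simp [hm]
  rw [h1]
  let φ : Kˣ ↪ K := ⟨fun x ↦ x, Units.val_injective⟩
  have huniv : univ.map φ = univ \ {0} := by
    ext x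
    simpa only [mem_map, mem_univ, Function.Embedding.coeFn_mk, true_and, mem_sdiff,
      mem_singleton, φ] using (show (∃ a : Kˣ, (a : K) = x) ↔ x ≠ 0 from isUnit_iff_ne_zero)
  calc
    ∑ x : K, x ^ m = ∑ x ∈ univ \ {(0 : K)}, x ^ m := by
      rw [← sum_sdiff ({0} : Finset K).subset_univ, sum_singleton, zero_pow hm, add_zero]
    _ = ∑ x : Kˣ, (x ^ m : K) := by simp [φ, ← huniv, univ.sum_map φ]
    _ = _ := FiniteField.sum_pow_units K m

lemma key_pairs_aux (p e j k : ℕ) (he : p = 2*e+5)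
    (hj : j < 5*e+11) (hk : k < 5*e+11) :
    (p*j + k ≠ 0 ∧ (p^2 - 1) ∣ (p*j + k)) ↔
      ((j = p-1 ∧ k = p-1) ∨ (j = p-2 ∧ k = 2*p-1) ∨
       (j = 2*p-2 ∧ k = 2*p-2) ∨ (j = 2*p-1 ∧ k = p-2)) := by
  have hp0 : 0 < p := by omega
  have hq : p^2 - 1 = 4*e^2+20*e+24 := by
    rw [he, show (2*e+5)^2 = (4*e^2+20*e+24)+1 from by ring, Nat.add_sub_cancel]
  constructor
  · rintro ⟨hne, t, ht⟩
    rw [hq] at ht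
    have ht0 : t ≠ 0 := by rintro rfl; rw [mul_zero] at ht; exact hne ht
    have hb : p*j + k ≤ 10*e^2+50*e+60 := by
      have h1 : p*j ≤ p*(5*e+10) := Nat.mul_le_mul_left p (by omega)
      have h2 : p*(5*e+10) = 10*e^2+45*e+50 := by rw [he]; ring
      omega
    have ht3 : t < 3 := by
      by_contra h
      push_neg at h
      have : (4*e^2+20*e+24)*3 ≤ (4*e^2+20*e+24)*t := Nat.mul_le_mul_left _ h
      nlinarith
    have hcase : t = 1 ∨ t = 2 := by omega
    rcases hcase with rfl | rfl
    · have hk1 : p*j + (k+1) = p*p := by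
        have hpp : p*p = (4*e^2+20*e+24)*1 + 1 := by rw [he]; ring
        omega
      have hdk : p ∣ k+1 :=
        (Nat.dvd_add_right (dvd_mul_right p j)).mp (by rw [hk1]; exact dvd_mul_right p p)
      obtain ⟨m, hm⟩ := hdk
      have hm3 : m < 3 := by
        have h1 : p*m < 3*p := by omega
        exact Nat.lt_of_mul_lt_mul_left (by omega : p*m < p*3)
      have hm0 : m ≠ 0 := by rintro rfl; omega
      have hjm : j + m = p := Nat.eq_of_mul_eq_mul_left hp0 (by rw [mul_add]; omega)
      have : m = 1 ∨ m = 2 := by omega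
      rcases this with rfl | rfl <;> omega
    · have hk2 : p*j + (k+2) = p*(2*p) := by
        have hpp : p*(2*p) = (4*e^2+20*e+24)*2 + 2 := by rw [he]; ring
        omega
      have hdk : p ∣ k+2 :=
        (Nat.dvd_add_right (dvd_mul_right p j)).mp (by rw [hk2]; exact dvd_mul_right p (2*p))
      obtain ⟨m, hm⟩ := hdk
      have hm3 : m < 3 := by
        have h1 : p*m < 3*p := by omega
        exact Nat.lt_of_mul_lt_mul_left (by omega : p*m < p*3)
      have hm0 : m ≠ 0 := by rintro rfl; omega
      have hjm : j + m = 2*p := Nat.eq_of_mul_eq_mul_left hp0 (by rw [mul_add]; omega)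
      have : m = 1 ∨ m = 2 := by omega
      rcases this with rfl | rfl <;> omega
  · have e1 : p - 1 = 2*e+4 := by omega
    have e2 : p - 2 = 2*e+3 := by omega
    have e3 : 2*p - 1 = 4*e+9 := by omega
    have e4 : 2*p - 2 = 4*e+8 := by omega
    rintro (⟨rfl, rfl⟩ | ⟨rfl, rfl⟩ | ⟨rfl, rfl⟩ | ⟨rfl, rfl⟩) <;> rw [hq]
    · rw [e1]; exact ⟨by rw [he]; positivity, ⟨1, by rw [he]; ring⟩⟩
    · rw [e2, e3]; exact ⟨by rw [he]; positivity, ⟨1, by rw [he]; ring⟩⟩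
    · rw [e4]; exact ⟨by rw [he]; positivity, ⟨2, by rw [he]; ring⟩⟩
    · rw [e3, e2]; exact ⟨by rw [he]; positivity, ⟨2, by rw [he]; ring⟩⟩

/-- For the quintic `f = X(X-1)(X-α₁)(X-α₂)(X-α₃)` over `𝔽_p` and `F` a field with `p²`
elements, with `f̃` the image of `f` in `F[X]`, one has
`∑_{α ∈ F} f̃(α)^((p²-1)/2) = -(2 c̃_{p-2} c̃_{2p-1} + c̃_{p-1}² + c̃_{2p-2}²)`. -/
theorem sum_f_pow_quadratic_eq (p : ℕ) [Fact p.Prime] (hp : 5 ≤ p)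
    (α₁ α₂ α₃ : ZMod p)
    (h12 : α₁ ≠ α₂) (h13 : α₁ ≠ α₃) (h23 : α₂ ≠ α₃)
    (h10 : α₁ ≠ 0) (h20 : α₂ ≠ 0) (h30 : α₃ ≠ 0)
    (h11 : α₁ ≠ 1) (h21 : α₂ ≠ 1) (h31 : α₃ ≠ 1)
    (f : Polynomial (ZMod p))
    (hf : f = X * (X - 1) * (X - C α₁) * (X - C α₂) * (X - C α₃))
    (c : ℕ → ZMod p) (hc : ∀ k, c k = (f ^ ((p - 1) / 2)).coeff k)
    (F : Type*) [Field F] [Fintype F] (hF : Fintype.card F = p ^ 2)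
    (ι : ZMod p →+* F) :
    ∑ α : F, ((f.map ι).eval α) ^ ((p ^ 2 - 1) / 2) =
      -(2 * ι (c (p - 2)) * ι (c (2 * p - 1)) +
        ι (c (p - 1)) ^ 2 + ι (c (2 * p - 2)) ^ 2) := by
  have hprime : p.Prime := Fact.out
  obtain ⟨e, he⟩ : ∃ e, p = 2 * e + 5 := by
    rcases hprime.eq_two_or_odd' with h | ⟨t, ht⟩
    · omega
    · exact ⟨t - 2, by omega⟩
  have key_pairs : ∀ j k : ℕ, j < 5*e+11 → k < 5*e+11 →
      ((p*j + k ≠ 0 ∧ (p^2 - 1) ∣ (p*j + k)) ↔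
      ((j = p-1 ∧ k = p-1) ∨ (j = p-2 ∧ k = 2*p-1) ∨
       (j = 2*p-2 ∧ k = 2*p-2) ∨ (j = 2*p-1 ∧ k = p-2))) :=
    fun j k hj hk => key_pairs_aux p e j k he hj hk
  have hdegf : f.natDegree ≤ 5 := by
    rw [hf]
    compute_degree
  classical
  haveI : CharP F p := charP_of_injective_ringHom ι.injective p
  set n := 5*e+11 with hn
  set g : F[X] := (f ^ ((p-1)/2)).map ι with hg
  have hgc : ∀ k, g.coeff k = ι (c k) := fun k => by rw [hg, coeff_map, hc]
  have hd2 : (p-1)/2 = e+2 := by omega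
  have hdegg : g.natDegree < n := by
    have h1 : g.natDegree ≤ (f ^ ((p-1)/2)).natDegree := natDegree_map_le
    have h2 : (f ^ ((p-1)/2)).natDegree ≤ ((p-1)/2) * f.natDegree := natDegree_pow_le
    have h3 : ((p-1)/2) * f.natDegree ≤ (e+2)*5 := by
      rw [hd2]; exact Nat.mul_le_mul_left _ hdegf
    omega
  have heval : ∀ x : F, g.eval x = ∑ i ∈ range n, g.coeff i * x^i :=
    fun x => eval_eq_sum_range' hdegg x
  have hmapg : g.map (frobenius F p) = g := by
    rw [hg, Polynomial.map_map]
    congr 1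
    ext x
    simp only [RingHom.comp_apply, frobenius_def, ← map_pow, ZMod.pow_card]
  have hfrob : ∀ α : F, g.eval α ^ p = g.eval (α ^ p) := by
    intro α
    conv_rhs => rw [← hmapg]
    exact ((Polynomial.eval_map (frobenius F p) (α ^ p)).trans
      (Polynomial.eval₂_hom (frobenius F p) α)).symm
  have hexp : (p^2 - 1)/2 = ((p-1)/2) * (p+1) := by
    have h1 : p^2-1 = (((p-1)/2)*(p+1))*2 := by
      rw [hd2, he, show (2*e+5)^2 = (((e+2)*((2*e+5)+1))*2)+1 from by ring, Nat.add_sub_cancel]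
    rw [h1, Nat.mul_div_cancel _ two_pos]
  calc ∑ α : F, ((f.map ι).eval α) ^ ((p^2-1)/2)
      = ∑ α : F, g.eval (α ^ p) * g.eval α := by
        refine Finset.sum_congr rfl fun α _ => ?_
        rw [hexp, pow_mul, ← eval_pow, ← Polynomial.map_pow, ← hg, pow_succ, hfrob]
    _ = ∑ j ∈ range n, ∑ k ∈ range n, ι (c j) * ι (c k) * ∑ α : F, α ^ (p*j+k) := by
        simp only [heval, Finset.sum_mul_sum, hgc]
        rw [Finset.sum_comm]
        refine Finset.sum_congr rfl fun j _ => ?_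
        rw [Finset.sum_comm]
        refine Finset.sum_congr rfl fun k _ => ?_
        rw [Finset.mul_sum]
        refine Finset.sum_congr rfl fun α _ => ?_
        rw [← pow_mul, pow_add]
        ring
    _ = ∑ j ∈ range n, ∑ k ∈ range n,
          (if p*j+k ≠ 0 ∧ (p^2-1) ∣ (p*j+k) then -(ι (c j) * ι (c k)) else 0) := by
        refine Finset.sum_congr rfl fun j _ => Finset.sum_congr rfl fun k _ => ?_
        rw [sum_pow_full F (p*j+k), hF, mul_ite, mul_neg_one, mul_zero]
    _ = ∑ x ∈ (range n ×ˢ range n).filter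
          (fun x => p*x.1+x.2 ≠ 0 ∧ (p^2-1) ∣ (p*x.1+x.2)), -(ι (c x.1) * ι (c x.2)) := by
        rw [Finset.sum_filter, Finset.sum_product]
    _ = ∑ x ∈ ({(p-1,p-1),(p-2,2*p-1),(2*p-2,2*p-2),(2*p-1,p-2)} : Finset (ℕ×ℕ)),
          -(ι (c x.1) * ι (c x.2)) := by
        congr 1
        ext x
        obtain ⟨j, k⟩ := x
        simp only [Finset.mem_filter, Finset.mem_product, Finset.mem_range, Finset.mem_insert,
          Finset.mem_singleton, Prod.mk.injEq]
        constructor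
        · rintro ⟨⟨hj, hk⟩, hcond⟩
          exact (key_pairs j k hj hk).mp hcond
        · intro h
          have hb : j < n ∧ k < n := by
            rcases h with ⟨h1,h2⟩|⟨h1,h2⟩|⟨h1,h2⟩|⟨h1,h2⟩ <;> omega
          exact ⟨⟨hb.1, hb.2⟩, (key_pairs j k hb.1 hb.2).mpr h⟩
    _ = -(2 * ι (c (p - 2)) * ι (c (2 * p - 1)) +
        ι (c (p - 1)) ^ 2 + ι (c (2 * p - 2)) ^ 2) := by
        have m1 : ((p-1,p-1) : ℕ×ℕ) ∉
            ({(p-2,2*p-1),(2*p-2,2*p-2),(2*p-1,p-2)} : Finset (ℕ×ℕ)) := by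
          simp only [Finset.mem_insert, Finset.mem_singleton, Prod.mk.injEq]
          omega
        have m2 : ((p-2,2*p-1) : ℕ×ℕ) ∉
            ({(2*p-2,2*p-2),(2*p-1,p-2)} : Finset (ℕ×ℕ)) := by
          simp only [Finset.mem_insert, Finset.mem_singleton, Prod.mk.injEq]
          omega
        have m3 : ((2*p-2,2*p-2) : ℕ×ℕ) ∉ ({(2*p-1,p-2)} : Finset (ℕ×ℕ)) := by
          simp only [Finset.mem_singleton, Prod.mk.injEq]
          omega
        rw [Finset.sum_insert m1, Finset.sum_insert m2, Finset.sum_insert m3,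
          Finset.sum_singleton]
        dsimp only
        ring
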